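/- Let V be a module (or object in a monoidal category of bimodules) with an endomorphism σ of V⊗V satisfying the braid relations on V⊗V⊗V. Define the braided binomials [n choose k, σ]: V^⊗n → V^⊗n recursively by [n choose 0,σ] = [n choose n,σ] = id and [n choose k,σ] = (id⊗[n-1 choose k-1,σ])σ₁⋯σ_{n-k} + (id⊗[n-1 choose k,σ]). Then for all n ≥ k ≥ m: [n choose k,σ]∘(id^{n-k}⊗[k choose m,σ]) = [n choose m,σ]∘([n-m choose k-m,σ]⊗id^m). -/

import Mathlib

/-- Abstract model of the tower of tensor powers `V^⊗n` of an `A`-bimodule `V`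
(tensor products over `A`), equipped with maps `sig n i` modelling the braiding
`σ` acting in tensor positions `i+1, i+2` (1-indexed), and operators
`padL`/`padR` modelling `id ⊗ f` and `f ⊗ id`.  The structure fields record the
evident compatibilities that hold in the genuine tensor-power model. -/
structure BraidTower where
  T : ℕ → Type*
  acg : ∀ n, AddCommGroup (T n)
  sig : (n : ℕ) → ℕ → (T n →+ T n)
  padL : ∀ {m m' : ℕ}, (T m →+ T m') → (T (m + 1) →+ T (m' + 1))
  padR : ∀ {m m' : ℕ}, (T m →+ T m') → (T (m + 1) →+ T (m' + 1))
  padL_id : ∀ n, padL (AddMonoidHom.id (T n)) = AddMonoidHom.id (T (n + 1))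
  padR_id : ∀ n, padR (AddMonoidHom.id (T n)) = AddMonoidHom.id (T (n + 1))
  padL_comp : ∀ {a b c : ℕ} (f : T a →+ T b) (g : T b →+ T c),
    padL (g.comp f) = (padL g).comp (padL f)
  padR_comp : ∀ {a b c : ℕ} (f : T a →+ T b) (g : T b →+ T c),
    padR (g.comp f) = (padR g).comp (padR f)
  padL_add : ∀ {a b : ℕ} (f g : T a →+ T b), padL (f + g) = padL f + padL g
  padR_add : ∀ {a b : ℕ} (f g : T a →+ T b), padR (f + g) = padR f + padR g
  padLR : ∀ {a b : ℕ} (f : T a →+ T b), padL (padR f) = padR (padL f)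
  padL_sig : ∀ n i, padL (sig n i) = sig (n + 1) (i + 1)
  padR_sig : ∀ n i, padR (sig n i) = sig (n + 1) i
  sig_comm : ∀ n i j, i + 1 < j →
    (sig n i).comp (sig n j) = (sig n j).comp (sig n i)

attribute [instance] BraidTower.acg

namespace BraidTower

variable (D : BraidTower)

/-- The braid (Yang–Baxter) relations for `σ`. -/
def Braided : Prop :=
  ∀ n i, (D.sig n i).comp ((D.sig n (i + 1)).comp (D.sig n i))
    = (D.sig n (i + 1)).comp ((D.sig n i).comp (D.sig n (i + 1)))

/-- Transport an element along an equality of degrees. -/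
def castT {n n' : ℕ} (h : n = n') (x : D.T n) : D.T n' := h ▸ x

/-- Transport a morphism along equalities of degrees. -/
def castHom {a b a' b' : ℕ} (h1 : a = a') (h2 : b = b')
    (f : D.T a →+ D.T b) : D.T a' →+ D.T b' := by
  subst h1; subst h2; exact f

/-- Transport an endomorphism along an equality of degrees. -/
def castEndo {n n' : ℕ} (h : n = n') (f : D.T n →+ D.T n) :
    D.T n' →+ D.T n' := by subst h; exact f

/-- `σ₁ σ₂ ⋯ σ_m` (composition, with `σ_m` applied first). -/
def chain (n : ℕ) : ℕ → (D.T n →+ D.T n)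
  | 0 => AddMonoidHom.id _
  | m + 1 => (chain n m).comp (D.sig n m)

/-- The braided binomial `[n choose k, σ]`, defined by the recursion
`[n choose k, σ] = (id ⊗ [n-1 choose k-1, σ]) σ₁⋯σ_{n-k} + (id ⊗ [n-1 choose k, σ])`
with `[n choose 0, σ] = [n choose n, σ] = id`. -/
def binom : (n : ℕ) → ℕ → (D.T n →+ D.T n)
  | _, 0 => AddMonoidHom.id _
  | 0, _ + 1 => AddMonoidHom.id _
  | n + 1, k + 1 =>
    if k = n then AddMonoidHom.id _
    else ((D.padL (binom n k)).comp (chain D (n + 1) (n - k))) + D.padL (binom n (k + 1))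

/-- `id^{⊗j} ⊗ f` (pad on the left `j` times). -/
def padLs {a b : ℕ} (f : D.T a →+ D.T b) : (j : ℕ) → (D.T (a + j) →+ D.T (b + j))
  | 0 => f
  | j + 1 => D.padL (padLs f j)

/-- `f ⊗ id^{⊗j}` (pad on the right `j` times). -/
def padRs {a b : ℕ} (f : D.T a →+ D.T b) : (j : ℕ) → (D.T (a + j) →+ D.T (b + j))
  | 0 => f
  | j + 1 => D.padR (padRs f j)

/-- The braided factorial `[n,σ]! = [n,σ] ∘ ([n-1,σ]! ⊗ id)`, where
`[n,σ] = [n choose 1, σ]` is the braided integer. -/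
def bfact : (n : ℕ) → (D.T n →+ D.T n)
  | 0 => AddMonoidHom.id _
  | n + 1 => (binom D (n + 1) 1).comp (D.padR (bfact n))

end BraidTower

namespace BraidTower
variable (D : BraidTower)

theorem castEndo_self {n : ℕ} (h : n = n) (f : D.T n →+ D.T n) : D.castEndo h f = f := rfl

theorem castEndo_comp {a b : ℕ} (h : a = b) (f g : D.T a →+ D.T a) :
    D.castEndo h (f.comp g) = (D.castEndo h f).comp (D.castEndo h g) := by subst h; rfl

theorem castEndo_add {a b : ℕ} (h : a = b) (f g : D.T a →+ D.T a) :
    D.castEndo h (f + g) = D.castEndo h f + D.castEndo h g := by subst h; rfl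

theorem castEndo_castEndo {a b c : ℕ} (h : a = b) (h' : b = c) (h'' : a = c) (f : D.T a →+ D.T a) :
    D.castEndo h' (D.castEndo h f) = D.castEndo h'' f := by subst h; subst h'; rfl

theorem castEndo_sig {a b : ℕ} (h : a = b) (i : ℕ) : D.castEndo h (D.sig a i) = D.sig b i := by
  subst h; rfl

theorem castEndo_id {a b : ℕ} (h : a = b) :
    D.castEndo h (AddMonoidHom.id (D.T a)) = AddMonoidHom.id (D.T b) := by subst h; rfl

theorem castEndo_chain {a b : ℕ} (h : a = b) (t : ℕ) :
    D.castEndo h (chain D a t) = chain D b t := by subst h; rfl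

theorem castEndo_binom {a b : ℕ} (h : a = b) (k : ℕ) :
    D.castEndo h (binom D a k) = binom D b k := by subst h; rfl

theorem castEndo_padL {a b : ℕ} (h : a = b) (h' : a + 1 = b + 1) (f : D.T a →+ D.T a) :
    D.castEndo h' (D.padL f) = D.padL (D.castEndo h f) := by subst h; rfl

theorem castEndo_padR {a b : ℕ} (h : a = b) (h' : a + 1 = b + 1) (f : D.T a →+ D.T a) :
    D.castEndo h' (D.padR f) = D.padR (D.castEndo h f) := by subst h; rfl

end BraidTower
namespace BraidTower
variable (D : BraidTower)

theorem padLs_id (a : ℕ) : ∀ j, padLs D (AddMonoidHom.id (D.T a)) j = AddMonoidHom.id _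
  | 0 => rfl
  | j + 1 => by rw [padLs, padLs_id a j]; exact D.padL_id (a + j)

theorem padRs_id (a : ℕ) : ∀ j, padRs D (AddMonoidHom.id (D.T a)) j = AddMonoidHom.id _
  | 0 => rfl
  | j + 1 => by rw [padRs, padRs_id a j]; exact D.padR_id (a + j)

theorem padLs_comp {a b c : ℕ} (f : D.T a →+ D.T b) (g : D.T b →+ D.T c) :
    ∀ j, padLs D (g.comp f) j = (padLs D g j).comp (padLs D f j)
  | 0 => rfl
  | j + 1 => by rw [padLs, padLs_comp f g j]; exact D.padL_comp _ _

theorem padRs_comp {a b c : ℕ} (f : D.T a →+ D.T b) (g : D.T b →+ D.T c) :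
    ∀ j, padRs D (g.comp f) j = (padRs D g j).comp (padRs D f j)
  | 0 => rfl
  | j + 1 => by rw [padRs, padRs_comp f g j]; exact D.padR_comp _ _

theorem padLs_add {a b : ℕ} (f g : D.T a →+ D.T b) :
    ∀ j, padLs D (f + g) j = padLs D f j + padLs D g j
  | 0 => rfl
  | j + 1 => by rw [padLs, padLs_add f g j]; exact D.padL_add _ _

theorem padRs_add {a b : ℕ} (f g : D.T a →+ D.T b) :
    ∀ j, padRs D (f + g) j = padRs D f j + padRs D g j
  | 0 => rfl
  | j + 1 => by rw [padRs, padRs_add f g j]; exact D.padR_add _ _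

theorem padLs_sig (a i : ℕ) : ∀ j, padLs D (D.sig a i) j = D.sig (a + j) (i + j)
  | 0 => rfl
  | j + 1 => by rw [padLs, padLs_sig a i j]; exact D.padL_sig (a + j) (i + j)

theorem padRs_sig (a i : ℕ) : ∀ j, padRs D (D.sig a i) j = D.sig (a + j) i
  | 0 => rfl
  | j + 1 => by rw [padRs, padRs_sig a i j]; exact D.padR_sig (a + j) i

theorem padR_chain (u t : ℕ) : D.padR (chain D u t) = chain D (u + 1) t := by
  induction t with
  | zero => exact D.padR_id u
  | succ t ih => rw [chain, D.padR_comp, ih, D.padR_sig]; rfl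

theorem padRs_chain (u t : ℕ) : ∀ j, padRs D (chain D u t) j = chain D (u + j) t
  | 0 => rfl
  | j + 1 => by rw [padRs, padRs_chain u t j]; exact padR_chain D (u + j) t

theorem padLs_castEndo {a b : ℕ} (h : a = b) (f : D.T a →+ D.T a) (j : ℕ)
    (h' : a + j = b + j) :
    padLs D (D.castEndo h f) j = D.castEndo h' (padLs D f j) := by
  subst h; rfl

theorem padRs_castEndo {a b : ℕ} (h : a = b) (f : D.T a →+ D.T a) (j : ℕ)
    (h' : a + j = b + j) :
    padRs D (D.castEndo h f) j = D.castEndo h' (padRs D f j) := by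
  subst h; rfl

/-- A1 -/
theorem padLs_padL {a : ℕ} (f : D.T a →+ D.T a) :
    ∀ j (h : a + (j + 1) = (a + 1) + j),
      D.castEndo h (padLs D f (j + 1)) = padLs D (D.padL f) j
  | 0, h => castEndo_self D h _
  | j + 1, h => by
      rw [show padLs D f (j + 1 + 1) = D.padL (padLs D f (j + 1)) from rfl,
        castEndo_padL D (show a + (j + 1) = (a + 1) + j by omega) h,
        padLs_padL f j]
      rfl

/-- A2 -/
theorem padRs_padR {a : ℕ} (f : D.T a →+ D.T a) :
    ∀ j (h : a + (j + 1) = (a + 1) + j),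
      D.castEndo h (padRs D f (j + 1)) = padRs D (D.padR f) j
  | 0, h => castEndo_self D h _
  | j + 1, h => by
      rw [show padRs D f (j + 1 + 1) = D.padR (padRs D f (j + 1)) from rfl,
        castEndo_padR D (show a + (j + 1) = (a + 1) + j by omega) h,
        padRs_padR f j]
      rfl

/-- A3 -/
theorem padLs_padR' {a : ℕ} (f : D.T a →+ D.T a) :
    ∀ j (h : (a + 1) + j = (a + j) + 1),
      D.castEndo h (padLs D (D.padR f) j) = D.padR (padLs D f j)
  | 0, h => castEndo_self D h _
  | j + 1, h => by
      rw [show padLs D (D.padR f) (j + 1) = D.padL (padLs D (D.padR f) j) from rfl,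
        castEndo_padL D (show (a + 1) + j = (a + j) + 1 by omega) h,
        padLs_padR' f j, D.padLR]
      rfl

/-- A4 -/
theorem padRs_padL' {a : ℕ} (f : D.T a →+ D.T a) :
    ∀ j (h : (a + 1) + j = (a + j) + 1),
      D.castEndo h (padRs D (D.padL f) j) = D.padL (padRs D f j)
  | 0, h => castEndo_self D h _
  | j + 1, h => by
      rw [show padRs D (D.padL f) (j + 1) = D.padR (padRs D (D.padL f) j) from rfl,
        castEndo_padR D (show (a + 1) + j = (a + j) + 1 by omega) h,
        padRs_padL' f j, ← D.padLR]
      rfl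

end BraidTower
namespace BraidTower
variable (D : BraidTower)

/-- `id^{⊗j} ⊗ f` at arbitrary (provably equal) target degree. -/
def pL (j : ℕ) {a n : ℕ} (h : a + j = n) (f : D.T a →+ D.T a) : D.T n →+ D.T n :=
  D.castEndo h (padLs D f j)

/-- `f ⊗ id^{⊗j}` at arbitrary (provably equal) target degree. -/
def pR (j : ℕ) {a n : ℕ} (h : a + j = n) (f : D.T a →+ D.T a) : D.T n →+ D.T n :=
  D.castEndo h (padRs D f j)

theorem pL_comp {a n : ℕ} (j : ℕ) (h : a + j = n) (f g : D.T a →+ D.T a) :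
    pL D j h (f.comp g) = (pL D j h f).comp (pL D j h g) := by
  unfold pL; rw [padLs_comp, castEndo_comp]

theorem pR_comp {a n : ℕ} (j : ℕ) (h : a + j = n) (f g : D.T a →+ D.T a) :
    pR D j h (f.comp g) = (pR D j h f).comp (pR D j h g) := by
  unfold pR; rw [padRs_comp, castEndo_comp]

theorem pL_add {a n : ℕ} (j : ℕ) (h : a + j = n) (f g : D.T a →+ D.T a) :
    pL D j h (f + g) = pL D j h f + pL D j h g := by
  unfold pL; rw [padLs_add, castEndo_add]

theorem pR_add {a n : ℕ} (j : ℕ) (h : a + j = n) (f g : D.T a →+ D.T a) :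
    pR D j h (f + g) = pR D j h f + pR D j h g := by
  unfold pR; rw [padRs_add, castEndo_add]

theorem pL_id {a n : ℕ} (j : ℕ) (h : a + j = n) :
    pL D j h (AddMonoidHom.id (D.T a)) = AddMonoidHom.id (D.T n) := by
  unfold pL; rw [padLs_id, castEndo_id]

theorem pR_id {a n : ℕ} (j : ℕ) (h : a + j = n) :
    pR D j h (AddMonoidHom.id (D.T a)) = AddMonoidHom.id (D.T n) := by
  unfold pR; rw [padRs_id, castEndo_id]

theorem pR_chain {a n : ℕ} (j : ℕ) (h : a + j = n) (t : ℕ) :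
    pR D j h (chain D a t) = chain D n t := by
  unfold pR; rw [padRs_chain, castEndo_chain]

theorem pL_succ {a n : ℕ} (j : ℕ) (h : a + (j + 1) = n + 1) (h2 : a + j = n)
    (f : D.T a →+ D.T a) : pL D (j + 1) h f = D.padL (pL D j h2 f) := by
  unfold pL
  exact castEndo_padL D h2 h (padLs D f j)

theorem pR_succ {a n : ℕ} (j : ℕ) (h : a + (j + 1) = n + 1) (h2 : a + j = n)
    (f : D.T a →+ D.T a) : pR D (j + 1) h f = D.padR (pR D j h2 f) := by
  unfold pR
  exact castEndo_padR D h2 h (padRs D f j)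

theorem pL_padL {a n : ℕ} (j : ℕ) (h : (a + 1) + j = n) (h2 : a + (j + 1) = n)
    (f : D.T a →+ D.T a) : pL D j h (D.padL f) = pL D (j + 1) h2 f := by
  unfold pL
  rw [← padLs_padL D f j (show a + (j+1) = (a+1) + j by omega),
    castEndo_castEndo D _ h h2]

theorem pR_padR {a n : ℕ} (j : ℕ) (h : (a + 1) + j = n) (h2 : a + (j + 1) = n)
    (f : D.T a →+ D.T a) : pR D j h (D.padR f) = pR D (j + 1) h2 f := by
  unfold pR
  rw [← padRs_padR D f j (show a + (j+1) = (a+1) + j by omega),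
    castEndo_castEndo D _ h h2]

theorem pR_padL {a n : ℕ} (j : ℕ) (h : (a + 1) + j = n + 1) (h2 : a + j = n)
    (f : D.T a →+ D.T a) : pR D j h (D.padL f) = D.padL (pR D j h2 f) := by
  unfold pR
  have hA : (a + 1) + j = (a + j) + 1 := by omega
  have e : padRs D (D.padL f) j = D.castEndo hA.symm (D.padL (padRs D f j)) := by
    rw [← padRs_padL' D f j hA, castEndo_castEndo D hA hA.symm rfl, castEndo_self]
  rw [e, castEndo_castEndo D hA.symm h (show (a+j)+1 = n+1 by omega),
    castEndo_padL D h2 _]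

theorem pL_padR {a n : ℕ} (j : ℕ) (h : (a + 1) + j = n + 1) (h2 : a + j = n)
    (f : D.T a →+ D.T a) : pL D j h (D.padR f) = D.padR (pL D j h2 f) := by
  unfold pL
  have hA : (a + 1) + j = (a + j) + 1 := by omega
  have e : padLs D (D.padR f) j = D.castEndo hA.symm (D.padR (padLs D f j)) := by
    rw [← padLs_padR' D f j hA, castEndo_castEndo D hA hA.symm rfl, castEndo_self]
  rw [e, castEndo_castEndo D hA.symm h (show (a+j)+1 = n+1 by omega),
    castEndo_padR D h2 _]

theorem pL_cast {a b n : ℕ} (j : ℕ) (h : a + j = n) (h' : b = a) (h2 : b + j = n)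
    (f : D.T b →+ D.T b) : pL D j h (D.castEndo h' f) = pL D j h2 f := by
  subst h'; rfl

theorem pR_cast {a b n : ℕ} (j : ℕ) (h : a + j = n) (h' : b = a) (h2 : b + j = n)
    (f : D.T b →+ D.T b) : pR D j h (D.castEndo h' f) = pR D j h2 f := by
  subst h'; rfl

theorem chain_split (a j b : ℕ) :
    chain D (a + j) (j + b) = (chain D (a + j) j).comp (padLs D (chain D a b) j) := by
  induction b with
  | zero =>
      rw [show chain D a 0 = AddMonoidHom.id _ from rfl, padLs_id, AddMonoidHom.comp_id]
      rfl
  | succ b ih =>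
      rw [show (j + (b + 1)) = (j + b) + 1 from rfl, chain, ih,
        show chain D a (b + 1) = (chain D a b).comp (D.sig a b) from rfl,
        padLs_comp, padLs_sig, show b + j = j + b by omega, AddMonoidHom.comp_assoc]

theorem pL_chain {a n : ℕ} (j : ℕ) (h : a + j = n) (t : ℕ) :
    chain D n (j + t) = (chain D n j).comp (pL D j h (chain D a t)) := by
  subst h
  rw [show pL D j rfl (chain D a t) = padLs D (chain D a t) j from rfl]
  exact chain_split D a j t

theorem chain_sig_comm (n t i : ℕ) (h : t < i) :
    (chain D n t).comp (D.sig n i) = (D.sig n i).comp (chain D n t) := by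
  induction t with
  | zero =>
      rw [show chain D n 0 = AddMonoidHom.id _ from rfl, AddMonoidHom.comp_id,
        AddMonoidHom.id_comp]
  | succ t ih =>
      rw [chain, AddMonoidHom.comp_assoc, D.sig_comm n t i (by omega),
        ← AddMonoidHom.comp_assoc, ih (by omega), AddMonoidHom.comp_assoc]

theorem chain_cross_aux (hbraid : D.Braided) (n i : ℕ) :
    ∀ b, (chain D n (i + 2 + b)).comp (D.sig n i)
      = (D.sig n (i + 1)).comp (chain D n (i + 2 + b))
  | 0 => by
      rw [show chain D n (i + 2) = ((chain D n i).comp (D.sig n i)).comp (D.sig n (i+1))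
          from rfl]
      simp only [AddMonoidHom.comp_assoc]
      rw [hbraid n i,
        ← AddMonoidHom.comp_assoc ((D.sig n i).comp (D.sig n (i+1))) (D.sig n (i+1))
          (chain D n i),
        chain_sig_comm D n i (i+1) (by omega), AddMonoidHom.comp_assoc]
  | b + 1 => by
      rw [show chain D n (i + 2 + (b+1)) = (chain D n (i+2+b)).comp (D.sig n (i+2+b))
          from rfl]
      simp only [AddMonoidHom.comp_assoc]
      rw [← D.sig_comm n i (i+2+b) (by omega),
        ← AddMonoidHom.comp_assoc (D.sig n (i+2+b)) (D.sig n i) (chain D n (i+2+b)),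
        chain_cross_aux hbraid n i b, AddMonoidHom.comp_assoc]

theorem chain_cross (hbraid : D.Braided) {n i j : ℕ} (hij : i + 2 ≤ j) :
    (chain D n j).comp (D.sig n i) = (D.sig n (i + 1)).comp (chain D n j) := by
  obtain ⟨b, rfl⟩ : ∃ b, j = i + 2 + b := ⟨j - (i + 2), by omega⟩
  exact chain_cross_aux D hbraid n i b

theorem binom_zero (n : ℕ) : binom D n 0 = AddMonoidHom.id _ := by
  cases n <;> rfl

theorem binom_self (n : ℕ) : binom D n n = AddMonoidHom.id _ := by
  cases n with
  | zero => rfl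
  | succ n =>
      rw [show binom D (n+1) (n+1) = if n = n then AddMonoidHom.id (D.T (n+1)) else
        ((D.padL (binom D n n)).comp (chain D (n+1) (n - n))) + D.padL (binom D n (n+1))
        from rfl, if_pos rfl]

theorem binom_unfold {n1 k k1 q : ℕ} (h2 : k = k1 + 1)
    (h3 : k + q = n1 + 1) (h4 : 1 ≤ q) :
    binom D (n1 + 1) k
      = ((D.padL (binom D n1 k1)).comp (chain D (n1 + 1) q)) + D.padL (binom D n1 k) := by
  subst h2
  rw [show binom D (n1+1) (k1+1) = if k1 = n1 then AddMonoidHom.id (D.T (n1+1)) else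
      ((D.padL (binom D n1 k1)).comp (chain D (n1+1) (n1 - k1))) + D.padL (binom D n1 (k1+1))
      from rfl,
    if_neg (show ¬ k1 = n1 by omega), show n1 - k1 = q by omega]

/-- The class of maps generated by identities and braidings via sums,
compositions and paddings. -/
inductive Reg (D : BraidTower) : (a : ℕ) → (D.T a →+ D.T a) → Prop
  | id : ∀ a, Reg D a (AddMonoidHom.id _)
  | sig : ∀ a i, i + 2 ≤ a → Reg D a (D.sig a i)
  | comp : ∀ {a : ℕ} {f g : D.T a →+ D.T a}, Reg D a f → Reg D a g → Reg D a (f.comp g)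
  | add : ∀ {a : ℕ} {f g : D.T a →+ D.T a}, Reg D a f → Reg D a g → Reg D a (f + g)
  | padL : ∀ {a : ℕ} {f : D.T a →+ D.T a}, Reg D a f → Reg D (a + 1) (D.padL f)
  | padR : ∀ {a : ℕ} {f : D.T a →+ D.T a}, Reg D a f → Reg D (a + 1) (D.padR f)

theorem reg_chain (a : ℕ) : ∀ t, t + 1 ≤ a → Reg D a (chain D a t)
  | 0, _ => Reg.id a
  | t + 1, h => Reg.comp (reg_chain a t (by omega)) (Reg.sig a t (by omega))

theorem reg_binom : ∀ n k, Reg D n (binom D n k)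
  | n, 0 => by rw [binom_zero]; exact Reg.id n
  | 0, k + 1 => by rw [show binom D 0 (k+1) = AddMonoidHom.id _ from rfl]; exact Reg.id 0
  | n + 1, k + 1 => by
      rw [show binom D (n+1) (k+1) = if k = n then AddMonoidHom.id (D.T (n+1)) else
        ((D.padL (binom D n k)).comp (chain D (n+1) (n - k))) + D.padL (binom D n (k+1))
        from rfl]
      split
      · exact Reg.id (n + 1)
      · exact Reg.add
          (Reg.comp (Reg.padL (reg_binom n k)) (reg_chain D (n+1) (n-k) (by omega)))
          (Reg.padL (reg_binom n (k+1)))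

end BraidTower
namespace BraidTower
variable (D : BraidTower)

theorem comm_L {a : ℕ} {f : D.T a →+ D.T a} (hf : Reg D a f) :
    ∀ j i, i + 2 ≤ j →
      (D.sig (a + j) i).comp (padLs D f j) = (padLs D f j).comp (D.sig (a + j) i) := by
  induction hf with
  | id a =>
      intro j i hij
      rw [padLs_id, AddMonoidHom.comp_id, AddMonoidHom.id_comp]
  | sig a u hu =>
      intro j i hij
      rw [padLs_sig]
      exact D.sig_comm (a + j) i (u + j) (by omega)
  | comp hf hg ihf ihg =>
      intro j i hij
      rw [padLs_comp, ← AddMonoidHom.comp_assoc, ihf j i hij, AddMonoidHom.comp_assoc,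
        ihg j i hij, ← AddMonoidHom.comp_assoc]
  | add hf hg ihf ihg =>
      intro j i hij
      rw [padLs_add, AddMonoidHom.comp_add, AddMonoidHom.add_comp, ihf j i hij, ihg j i hij]
  | padL hf ih =>
      intro j i hij
      rename_i a f
      have hA : a + (j + 1) = (a + 1) + j := by omega
      rw [← padLs_padL D f j hA, ← castEndo_sig D hA i, ← castEndo_comp, ← castEndo_comp,
        ih (j + 1) i (by omega)]
  | padR hf ih =>
      intro j i hij
      rename_i a f
      have hA : (a + 1) + j = (a + j) + 1 := by omega
      have e : padLs D (D.padR f) j = D.castEndo hA.symm (D.padR (padLs D f j)) := by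
        rw [← padLs_padR' D f j hA, castEndo_castEndo D hA hA.symm rfl, castEndo_self]
      rw [e, ← castEndo_sig D hA.symm i, ← castEndo_comp, ← castEndo_comp]
      refine congrArg (D.castEndo hA.symm) ?_
      rw [← D.padR_sig, ← D.padR_comp, ← D.padR_comp, ih j i hij]

theorem comm_R {a : ℕ} {f : D.T a →+ D.T a} (hf : Reg D a f) :
    ∀ j i, a ≤ i →
      (D.sig (a + j) i).comp (padRs D f j) = (padRs D f j).comp (D.sig (a + j) i) := by
  induction hf with
  | id a =>
      intro j i hij
      rw [padRs_id, AddMonoidHom.comp_id, AddMonoidHom.id_comp]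
  | sig a u hu =>
      intro j i hij
      rw [padRs_sig]
      exact (D.sig_comm (a + j) u i (by omega)).symm
  | comp hf hg ihf ihg =>
      intro j i hij
      rw [padRs_comp, ← AddMonoidHom.comp_assoc, ihf j i hij, AddMonoidHom.comp_assoc,
        ihg j i hij, ← AddMonoidHom.comp_assoc]
  | add hf hg ihf ihg =>
      intro j i hij
      rw [padRs_add, AddMonoidHom.comp_add, AddMonoidHom.add_comp, ihf j i hij, ihg j i hij]
  | padL hf ih =>
      intro j i hij
      rename_i a f
      obtain ⟨i', rfl⟩ : ∃ i', i = i' + 1 := ⟨i - 1, by omega⟩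
      have hA : (a + 1) + j = (a + j) + 1 := by omega
      have e : padRs D (D.padL f) j = D.castEndo hA.symm (D.padL (padRs D f j)) := by
        rw [← padRs_padL' D f j hA, castEndo_castEndo D hA hA.symm rfl, castEndo_self]
      rw [e, ← castEndo_sig D hA.symm (i' + 1), ← castEndo_comp, ← castEndo_comp]
      refine congrArg (D.castEndo hA.symm) ?_
      rw [← D.padL_sig, ← D.padL_comp, ← D.padL_comp, ih j i' (by omega)]
  | padR hf ih =>
      intro j i hij
      rename_i a f
      have hA : a + (j + 1) = (a + 1) + j := by omega
      rw [← padRs_padR D f j hA, ← castEndo_sig D hA i, ← castEndo_comp, ← castEndo_comp,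
        ih (j + 1) i (by omega)]

theorem chain_comm_pL {a : ℕ} {f : D.T a →+ D.T a} (hf : Reg D a f)
    (j : ℕ) {n : ℕ} (h : a + j = n) :
    ∀ t, t + 1 ≤ j → (chain D n t).comp (pL D j h f) = (pL D j h f).comp (chain D n t) := by
  subst h
  rw [show pL D j rfl f = padLs D f j from rfl]
  intro t
  induction t with
  | zero =>
      intro _
      rw [show chain D (a + j) 0 = AddMonoidHom.id _ from rfl, AddMonoidHom.comp_id,
        AddMonoidHom.id_comp]
  | succ t ih =>
      intro ht
      rw [chain, AddMonoidHom.comp_assoc, comm_L D hf j t (by omega),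
        ← AddMonoidHom.comp_assoc, ih (by omega), AddMonoidHom.comp_assoc]

theorem cross1 (hbraid : D.Braided) {a : ℕ} {f : D.T a →+ D.T a} (hf : Reg D a f) :
    (chain D (a + 1) a).comp (D.padR f) = (D.padL f).comp (chain D (a + 1) a) := by
  induction hf with
  | id a => rw [D.padR_id, D.padL_id, AddMonoidHom.comp_id, AddMonoidHom.id_comp]
  | sig a u hu =>
      rw [D.padR_sig, D.padL_sig]
      exact chain_cross D hbraid (by omega)
  | comp hf hg ihf ihg =>
      rw [D.padR_comp, D.padL_comp, ← AddMonoidHom.comp_assoc, ihf, AddMonoidHom.comp_assoc,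
        ihg, ← AddMonoidHom.comp_assoc]
  | add hf hg ihf ihg =>
      rw [D.padR_add, D.padL_add, AddMonoidHom.comp_add, AddMonoidHom.add_comp, ihf, ihg]
  | padL hf ih =>
      rename_i a f
      have e : chain D (a+1+1) (a + 1) = (chain D (a+1+1) 1).comp (padLs D (chain D (a+1) a) 1) := by
        have h0 := chain_split D (a + 1) 1 a
        rw [show (1 + a : ℕ) = a + 1 by omega] at h0
        exact h0
      rw [e, show chain D (a+1+1) 1 = (AddMonoidHom.id (D.T (a+1+1))).comp (D.sig (a+1+1) 0) from rfl,
        AddMonoidHom.id_comp,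
        show padLs D (chain D (a+1) a) 1 = D.padL (chain D (a+1) a) from rfl,
        ← D.padLR, AddMonoidHom.comp_assoc, ← D.padL_comp, ih, D.padL_comp,
        ← AddMonoidHom.comp_assoc,
        show D.padL (D.padL f) = padLs D f 2 from rfl]
      rw [show (D.sig (a+1+1) 0).comp (padLs D f 2) = (padLs D f 2).comp (D.sig (a+1+1) 0)
        from comm_L D hf 2 0 (by omega), AddMonoidHom.comp_assoc]
  | padR hf ih =>
      rename_i a f
      rw [show chain D ((a+1) + 1) (a + 1) = (chain D (a+1+1) a).comp (D.sig (a+1+1) a) from rfl,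
        ← padR_chain, AddMonoidHom.comp_assoc,
        show D.padR (D.padR f) = padRs D f 2 from rfl,
        comm_R D hf 2 a (by omega), ← AddMonoidHom.comp_assoc,
        show padRs D f 2 = D.padR (D.padR f) from rfl,
        ← D.padR_comp, ih, D.padR_comp, D.padLR, AddMonoidHom.comp_assoc]

theorem cross (hbraid : D.Braided) {a : ℕ} {f : D.T a →+ D.T a} (hf : Reg D a f)
    (e : ℕ) {n : ℕ} (h : a + (e + 1) = n + 1) (h2 : a + e = n) :
    (chain D (n + 1) a).comp (pR D (e + 1) h f)
      = (D.padL (pR D e h2 f)).comp (chain D (n + 1) a) := by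
  subst h2
  rw [show pR D (e+1) h f = padRs D f (e+1) from rfl,
    show pR D e rfl f = padRs D f e from rfl]
  have step := congrArg (fun g => padRs D g e) (cross1 D hbraid hf)
  rw [padRs_comp, padRs_comp, padRs_chain] at step
  have hX : (a + 1) + e = (a + e) + 1 := by omega
  have step2 := congrArg (D.castEndo hX) step
  rw [castEndo_comp, castEndo_comp, castEndo_chain, padRs_padL' D f e hX,
    show D.castEndo hX (padRs D (D.padR f) e)
      = D.castEndo hX (D.castEndo (show a + (e+1) = (a+1)+e by omega) (padRs D f (e+1)))
      from by rw [padRs_padR],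
    castEndo_castEndo D _ hX (show a + (e+1) = (a+e)+1 by omega), castEndo_self] at step2
  exact step2

end BraidTower
namespace BraidTower
variable (D : BraidTower)

theorem main (hbraid : D.Braided) :
    ∀ (N m p q n : ℕ), m + p + q = n → m + p + q ≤ N →
      ∀ (h1 : (m + p) + q = n) (h2 : (p + q) + m = n),
      (binom D n (m + p)).comp (pL D q h1 (binom D (m + p) m))
        = (binom D n m).comp (pR D m h2 (binom D (p + q) p)) := by
  intro N
  induction N with
  | zero =>
      intro m p q n hn hN h1 h2
      obtain rfl : m = 0 := by omega
      obtain rfl : p = 0 := by omega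
      obtain rfl : q = 0 := by omega
      obtain rfl : n = 0 := by omega
      rfl
  | succ N ih =>
      intro m p q n hn hN h1 h2
      rcases eq_or_ne q 0 with rfl | hq
      · -- q = 0
        subst hn
        rw [show pL D 0 h1 (binom D (m + p) m) = binom D (m + p) m from rfl,
          show binom D (m + p + 0) (m + p) = AddMonoidHom.id _ from binom_self D (m + p),
          AddMonoidHom.id_comp,
          show binom D (p + 0) p = AddMonoidHom.id _ from binom_self D p,
          pR_id, AddMonoidHom.comp_id]
        rfl
      · obtain ⟨Q, rfl⟩ : ∃ Q, q = Q + 1 := ⟨q - 1, by omega⟩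
        rcases eq_or_ne p 0 with rfl | hp
        · -- p = 0
          rw [show binom D (m + 0) m = AddMonoidHom.id _ from binom_self D m,
            pL_id, AddMonoidHom.comp_id, binom_zero, pR_id, AddMonoidHom.comp_id,
            Nat.add_zero]
        · obtain ⟨P, rfl⟩ : ∃ P, p = P + 1 := ⟨p - 1, by omega⟩
          rcases eq_or_ne m 0 with rfl | hm
          · -- m = 0
            rw [binom_zero, binom_zero, pL_id, AddMonoidHom.comp_id, AddMonoidHom.id_comp,
              show pR D 0 h2 (binom D (P + 1 + (Q + 1)) (P + 1))
                = binom D n (P + 1) from castEndo_binom D (by omega) (P + 1),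
              Nat.zero_add]
          · obtain ⟨M, rfl⟩ : ∃ M, m = M + 1 := ⟨m - 1, by omega⟩
            obtain ⟨n', rfl⟩ : ∃ n', n = n' + 1 := ⟨n - 1, by omega⟩
            -- proofs of degree equations
            have hQ : M + 1 + (P + 1) + Q = n' := by omega
            have hA1 : M + 1 + P + (Q + 1) = n' := by omega
            have hA2 : M + 1 + P + (Q + 1 + 1) = n' + 1 := by omega
            have hB1 : M + (P + 1) + (Q + 1) = n' := by omega
            have hMr : P + 1 + (Q + 1) + M = n' := by omega
            have hC' : P + 1 + Q + (M + 1) = n' := by omega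
            have hCx : P + (Q + 1) + (M + 1) = n' := by omega
            -- binom expansions
            have hb1 : binom D (n' + 1) (M + 1 + (P + 1))
                = ((D.padL (binom D n' (M + 1 + P))).comp (chain D (n' + 1) (Q + 1)))
                  + D.padL (binom D n' (M + 1 + (P + 1))) :=
              binom_unfold D (n1 := n') (by omega) (by omega) (by omega)
            have hb2 : binom D (M + 1 + (P + 1)) (M + 1)
                = ((D.padL (binom D (M + 1 + P) M)).comp
                    (chain D (M + 1 + P + 1) (P + 1)))
                  + D.padL (binom D (M + 1 + P) (M + 1)) :=
              binom_unfold D (n1 := M + 1 + P) (by omega) (by omega) (by omega)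
            have hb3 : binom D (n' + 1) (M + 1)
                = ((D.padL (binom D n' M)).comp (chain D (n' + 1) (P + 1 + (Q + 1))))
                  + D.padL (binom D n' (M + 1)) :=
              binom_unfold D (n1 := n') (by omega) (by omega) (by omega)
            have hb4 : binom D (P + 1 + (Q + 1)) (P + 1)
                = ((D.padL (binom D (P + 1 + Q) P)).comp
                    (chain D (P + 1 + Q + 1) (Q + 1)))
                  + D.padL (binom D (P + 1 + Q) (P + 1)) :=
              binom_unfold D (n1 := P + 1 + Q) (by omega) (by omega) (by omega)
            -- induction hypotheses
            have IH1 : (binom D n' (M + 1 + (P + 1))).comp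
                  (pL D Q hQ (binom D (M + 1 + (P + 1)) (M + 1)))
                = (binom D n' (M + 1)).comp
                  (pR D (M + 1) hC' (binom D (P + 1 + Q) (P + 1))) :=
              ih (M + 1) (P + 1) Q n' (by omega) (by omega) hQ hC'
            have IH2 : (binom D n' (M + 1 + P)).comp
                  (pL D (Q + 1) hA1 (binom D (M + 1 + P) (M + 1)))
                = (binom D n' (M + 1)).comp
                  (pR D (M + 1) hCx (binom D (P + (Q + 1)) P)) :=
              ih (M + 1) P (Q + 1) n' (by omega) (by omega) hA1 hCx
            have IH3 : (binom D n' (M + (P + 1))).comp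
                  (pL D (Q + 1) hB1 (binom D (M + (P + 1)) M))
                = (binom D n' M).comp
                  (pR D M hMr (binom D (P + 1 + (Q + 1)) (P + 1))) :=
              ih M (P + 1) (Q + 1) n' (by omega) (by omega) hB1 hMr
            -- conversions
            have cv1 : binom D n' (M + 1 + P) = binom D n' (M + (P + 1)) := by
              rw [show M + 1 + P = M + (P + 1) by omega]
            have cv2 : pL D (Q + 1) hA1 (binom D (M + 1 + P) M)
                = pL D (Q + 1) hB1 (binom D (M + (P + 1)) M) := by
              rw [← castEndo_binom D (show M + (P + 1) = M + 1 + P by omega) M]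
              exact pL_cast D (Q + 1) hA1 _ hB1 _
            have cv3 : pR D (M + 1) hCx (binom D (P + (Q + 1)) P)
                = pR D (M + 1) hC' (binom D (P + 1 + Q) P) := by
              rw [← castEndo_binom D (show P + 1 + Q = P + (Q + 1) by omega) P]
              exact pR_cast D (M + 1) hCx _ hC' _
            -- pL structure lemma instances
            have hL1 : pL D (Q + 1) h1 (binom D (M + 1 + (P + 1)) (M + 1))
                = D.padL (pL D Q hQ (binom D (M + 1 + (P + 1)) (M + 1))) :=
              pL_succ D Q h1 hQ _
            have t1a : pL D Q hQ (D.padL (binom D (M + 1 + P) M))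
                = pL D (Q + 1) hA1 (binom D (M + 1 + P) M) :=
              pL_padL D Q hQ hA1 _
            have t1c : pL D Q hQ (D.padL (binom D (M + 1 + P) (M + 1)))
                = pL D (Q + 1) hA1 (binom D (M + 1 + P) (M + 1)) :=
              pL_padL D Q hQ hA1 _
            have su1 : pL D (Q + 1 + 1) hA2 (binom D (M + 1 + P) M)
                = D.padL (pL D (Q + 1) hA1 (binom D (M + 1 + P) M)) :=
              pL_succ D (Q + 1) hA2 hA1 _
            have su2 : pL D (Q + 1 + 1) hA2 (binom D (M + 1 + P) (M + 1))
                = D.padL (pL D (Q + 1) hA1 (binom D (M + 1 + P) (M + 1))) :=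
              pL_succ D (Q + 1) hA2 hA1 _
            have hL2 : pL D (Q + 1) h1 (chain D (M + 1 + P + 1) (P + 1))
                = D.padL (pL D Q hQ (chain D (M + 1 + P + 1) (P + 1))) :=
              pL_succ D Q h1 hQ _
            -- chain commutation instances
            have cm1 : (chain D (n' + 1) (Q + 1)).comp
                  (pL D (Q + 1 + 1) hA2 (binom D (M + 1 + P) M))
                = (pL D (Q + 1 + 1) hA2 (binom D (M + 1 + P) M)).comp
                  (chain D (n' + 1) (Q + 1)) :=
              chain_comm_pL D (reg_binom D _ _) (Q + 1 + 1) hA2 (Q + 1) (by omega)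
            have cm2 : (chain D (n' + 1) (Q + 1)).comp
                  (pL D (Q + 1 + 1) hA2 (binom D (M + 1 + P) (M + 1)))
                = (pL D (Q + 1 + 1) hA2 (binom D (M + 1 + P) (M + 1))).comp
                  (chain D (n' + 1) (Q + 1)) :=
              chain_comm_pL D (reg_binom D _ _) (Q + 1 + 1) hA2 (Q + 1) (by omega)
            have pc : chain D (n' + 1) ((Q + 1) + (P + 1))
                = (chain D (n' + 1) (Q + 1)).comp
                  (pL D (Q + 1) h1 (chain D (M + 1 + P + 1) (P + 1))) :=
              pL_chain D (Q + 1) h1 (P + 1)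
            -- crossing lemma instance
            have cr : (chain D (n' + 1) (P + 1 + (Q + 1))).comp
                  (pR D (M + 1) h2 (binom D (P + 1 + (Q + 1)) (P + 1)))
                = (D.padL (pR D M hMr (binom D (P + 1 + (Q + 1)) (P + 1)))).comp
                  (chain D (n' + 1) (P + 1 + (Q + 1))) :=
              cross D hbraid (reg_binom D _ _) M h2 hMr
            -- pR structure instances
            have s2a : pR D (M + 1) h2 (D.padL (binom D (P + 1 + Q) P))
                = D.padL (pR D (M + 1) hC' (binom D (P + 1 + Q) P)) :=
              pR_padL D (M + 1) h2 hC' _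
            have s2b : pR D (M + 1) h2 (chain D (P + 1 + Q + 1) (Q + 1))
                = chain D (n' + 1) (Q + 1) :=
              pR_chain D (M + 1) h2 (Q + 1)
            have s2c : pR D (M + 1) h2 (D.padL (binom D (P + 1 + Q) (P + 1)))
                = D.padL (pR D (M + 1) hC' (binom D (P + 1 + Q) (P + 1))) :=
              pR_padL D (M + 1) h2 hC' _
            -- term 2 of the left-hand side
            have hterm2 : (D.padL (binom D n' (M + 1 + (P + 1)))).comp
                  (D.padL (pL D Q hQ (binom D (M + 1 + (P + 1)) (M + 1))))
                = D.padL ((binom D n' (M + 1)).comp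
                    (pR D (M + 1) hC' (binom D (P + 1 + Q) (P + 1)))) := by
              rw [← D.padL_comp, IH1]
            -- term 1 of the left-hand side
            have hterm1 : ((D.padL (binom D n' (M + 1 + P))).comp (chain D (n' + 1) (Q + 1))).comp
                  (D.padL (pL D Q hQ (binom D (M + 1 + (P + 1)) (M + 1))))
                = (D.padL ((binom D n' M).comp
                      (pR D M hMr (binom D (P + 1 + (Q + 1)) (P + 1))))).comp
                    (chain D (n' + 1) (P + 1 + (Q + 1)))
                  + (D.padL ((binom D n' (M + 1)).comp
                      (pR D (M + 1) hC' (binom D (P + 1 + Q) P)))).comp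
                    (chain D (n' + 1) (Q + 1)) := by
              conv_lhs =>
                rw [hb2, pL_add, pL_comp, t1a, t1c, D.padL_add, D.padL_comp,
                  ← su1, ← su2, ← hL2, AddMonoidHom.comp_add,
                  AddMonoidHom.comp_assoc
                    ((pL D (Q + 1 + 1) hA2 (binom D (M + 1 + P) M)).comp
                      (pL D (Q + 1) h1 (chain D (M + 1 + P + 1) (P + 1))))
                    (chain D (n' + 1) (Q + 1)) (D.padL (binom D n' (M + 1 + P))),
                  ← AddMonoidHom.comp_assoc
                    (pL D (Q + 1) h1 (chain D (M + 1 + P + 1) (P + 1)))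
                    (pL D (Q + 1 + 1) hA2 (binom D (M + 1 + P) M))
                    (chain D (n' + 1) (Q + 1)),
                  cm1,
                  AddMonoidHom.comp_assoc
                    (pL D (Q + 1) h1 (chain D (M + 1 + P + 1) (P + 1)))
                    (chain D (n' + 1) (Q + 1))
                    (pL D (Q + 1 + 1) hA2 (binom D (M + 1 + P) M)),
                  ← pc, su1,
                  ← AddMonoidHom.comp_assoc
                    (chain D (n' + 1) ((Q + 1) + (P + 1)))
                    (D.padL (pL D (Q + 1) hA1 (binom D (M + 1 + P) M)))
                    (D.padL (binom D n' (M + 1 + P))),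
                  ← D.padL_comp,
                  AddMonoidHom.comp_assoc
                    (pL D (Q + 1 + 1) hA2 (binom D (M + 1 + P) (M + 1)))
                    (chain D (n' + 1) (Q + 1)) (D.padL (binom D n' (M + 1 + P))),
                  cm2,
                  ← AddMonoidHom.comp_assoc
                    (chain D (n' + 1) (Q + 1))
                    (pL D (Q + 1 + 1) hA2 (binom D (M + 1 + P) (M + 1)))
                    (D.padL (binom D n' (M + 1 + P))),
                  su2, ← D.padL_comp, IH2, cv1, cv2, IH3, cv3,
                  show (Q + 1) + (P + 1) = P + 1 + (Q + 1) by omega]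
            -- right-hand side, term 1
            have hS1 : ((D.padL (binom D n' M)).comp (chain D (n' + 1) (P + 1 + (Q + 1)))).comp
                  (pR D (M + 1) h2 (binom D (P + 1 + (Q + 1)) (P + 1)))
                = (D.padL ((binom D n' M).comp
                    (pR D M hMr (binom D (P + 1 + (Q + 1)) (P + 1))))).comp
                  (chain D (n' + 1) (P + 1 + (Q + 1))) := by
              conv_lhs =>
                rw [AddMonoidHom.comp_assoc
                    (pR D (M + 1) h2 (binom D (P + 1 + (Q + 1)) (P + 1)))
                    (chain D (n' + 1) (P + 1 + (Q + 1))) (D.padL (binom D n' M)),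
                  cr,
                  ← AddMonoidHom.comp_assoc
                    (chain D (n' + 1) (P + 1 + (Q + 1)))
                    (D.padL (pR D M hMr (binom D (P + 1 + (Q + 1)) (P + 1))))
                    (D.padL (binom D n' M)),
                  ← D.padL_comp]
            -- right-hand side, term 2
            have hS2 : (D.padL (binom D n' (M + 1))).comp
                  (pR D (M + 1) h2 (binom D (P + 1 + (Q + 1)) (P + 1)))
                = (D.padL ((binom D n' (M + 1)).comp
                      (pR D (M + 1) hC' (binom D (P + 1 + Q) P)))).comp
                    (chain D (n' + 1) (Q + 1))
                  + D.padL ((binom D n' (M + 1)).comp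
                      (pR D (M + 1) hC' (binom D (P + 1 + Q) (P + 1)))) := by
              conv_lhs =>
                rw [hb4, pR_add, pR_comp, s2a, s2b, s2c, AddMonoidHom.comp_add,
                  ← AddMonoidHom.comp_assoc
                    (chain D (n' + 1) (Q + 1))
                    (D.padL (pR D (M + 1) hC' (binom D (P + 1 + Q) P)))
                    (D.padL (binom D n' (M + 1))),
                  ← D.padL_comp, ← D.padL_comp]
            -- assemble
            calc (binom D (n' + 1) (M + 1 + (P + 1))).comp
                  (pL D (Q + 1) h1 (binom D (M + 1 + (P + 1)) (M + 1)))
                = (((D.padL (binom D n' (M + 1 + P))).comp (chain D (n' + 1) (Q + 1)))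
                    + D.padL (binom D n' (M + 1 + (P + 1)))).comp
                  (D.padL (pL D Q hQ (binom D (M + 1 + (P + 1)) (M + 1)))) := by
                  rw [hb1, hL1]
              _ = ((D.padL (binom D n' (M + 1 + P))).comp (chain D (n' + 1) (Q + 1))).comp
                    (D.padL (pL D Q hQ (binom D (M + 1 + (P + 1)) (M + 1))))
                  + (D.padL (binom D n' (M + 1 + (P + 1)))).comp
                    (D.padL (pL D Q hQ (binom D (M + 1 + (P + 1)) (M + 1)))) :=
                  AddMonoidHom.add_comp _ _ _
              _ = ((D.padL ((binom D n' M).comp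
                      (pR D M hMr (binom D (P + 1 + (Q + 1)) (P + 1))))).comp
                    (chain D (n' + 1) (P + 1 + (Q + 1)))
                  + (D.padL ((binom D n' (M + 1)).comp
                      (pR D (M + 1) hC' (binom D (P + 1 + Q) P)))).comp
                    (chain D (n' + 1) (Q + 1)))
                  + D.padL ((binom D n' (M + 1)).comp
                      (pR D (M + 1) hC' (binom D (P + 1 + Q) (P + 1)))) := by
                  rw [hterm1, hterm2]
              _ = (D.padL ((binom D n' M).comp
                      (pR D M hMr (binom D (P + 1 + (Q + 1)) (P + 1))))).comp
                    (chain D (n' + 1) (P + 1 + (Q + 1)))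
                  + ((D.padL ((binom D n' (M + 1)).comp
                      (pR D (M + 1) hC' (binom D (P + 1 + Q) P)))).comp
                    (chain D (n' + 1) (Q + 1))
                  + D.padL ((binom D n' (M + 1)).comp
                      (pR D (M + 1) hC' (binom D (P + 1 + Q) (P + 1))))) :=
                  add_assoc _ _ _
              _ = ((D.padL (binom D n' M)).comp (chain D (n' + 1) (P + 1 + (Q + 1)))).comp
                    (pR D (M + 1) h2 (binom D (P + 1 + (Q + 1)) (P + 1)))
                  + (D.padL (binom D n' (M + 1))).comp
                    (pR D (M + 1) h2 (binom D (P + 1 + (Q + 1)) (P + 1))) := by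
                  rw [hS1, hS2]
              _ = (((D.padL (binom D n' M)).comp (chain D (n' + 1) (P + 1 + (Q + 1))))
                    + D.padL (binom D n' (M + 1))).comp
                  (pR D (M + 1) h2 (binom D (P + 1 + (Q + 1)) (P + 1))) :=
                  (AddMonoidHom.add_comp _ _ _).symm
              _ = (binom D (n' + 1) (M + 1)).comp
                  (pR D (M + 1) h2 (binom D (P + 1 + (Q + 1)) (P + 1))) := by
                  rw [← hb3]

end BraidTower

open BraidTower in
/-- **Composition rule for braided binomials.**
If `σ` satisfies the braid relations then for all `n ≥ k ≥ m` (here written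
`n = m + p + q`, `k = m + p`):
`[n choose k, σ] ∘ (id^{⊗(n-k)} ⊗ [k choose m, σ])
  = [n choose m, σ] ∘ ([n-m choose k-m, σ] ⊗ id^{⊗m})`. -/
theorem braided_binomial_composition (D : BraidTower) (hbraid : D.Braided)
    (m p q : ℕ) :
    (binom D (m + p + q) (m + p)).comp (padLs D (binom D (m + p) m) q)
      = (binom D (m + p + q) m).comp
          (castEndo D (show (p + q) + m = m + p + q by omega)
            (padRs D (binom D (p + q) p) m)) :=
  main D hbraid (m + p + q) m p q (m + p + q) rfl (le_refl _) rfl (by omega)
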